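/- Let L ≥ 4, R ≥ L + 3, Ω := (−R,R)², and let C₁ := (−1,1) × (−L−1, −L+1), C₂ := (−1/2,1/2)², C₃ := (−2,2) × (L−2, L+2) (ℓ^∞ balls of radii 1, 1/2, 2), A := C₁ ∪ C₂ ∪ C₃, and f := χ_{C₁} + χ_{C₂} + (1/2)χ_{C₃}. Set c₁ = 1, c₂ = 9/17, c₃ = 0 (so that c₂ = ∫_{C₂∪C₃} f /|C₂∪C₃| and c₃ = ∫_{Ω∖Ā} f /|Ω∖Ā|), and μ₁ = 85/8, μ₂ = 1445/72, μ₃ = 85/9. Then for the three-phase anisotropic Chan–Vese functional CV³_{1,μ} one has CV³_{1,μ}({C₁∪C₂, C₃, Ω∖Ā}, (c₁,c₂,c₃)) = (725/72)|C₁| < (733/72)|C₁| = CV³_{1,μ}({C₁, C₂∪C₃, Ω∖Ā}, (c₁,c₂,c₃)). In particular the partition {C₁, C₂∪C₃, Ω∖Ā} obtained by thresholding the AROF solution does not minimize Λ ↦ CV³_{1,μ}(Λ, c) over three-part partitions of Ω. -/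

import Mathlib

open MeasureTheory Set Filter
open scoped ENNReal

noncomputable section

/-- Divergence of a vector field on `ℝ²`. -/
def div2 (η : ℝ × ℝ → ℝ × ℝ) (x : ℝ × ℝ) : ℝ :=
  fderiv ℝ (fun y => (η y).1) x (1, 0) + fderiv ℝ (fun y => (η y).2) x (0, 1)

/-- The anisotropic (`ℓ¹`) total variation `|Du|₁(Ω)`. -/
def anisoTV (Ω : Set (ℝ × ℝ)) (u : ℝ × ℝ → ℝ) : ℝ≥0∞ :=
  sSup { t : ℝ≥0∞ | ∃ η : ℝ × ℝ → ℝ × ℝ, ContDiff ℝ 1 η ∧ HasCompactSupport η ∧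
    tsupport η ⊆ Ω ∧ (∀ x, |(η x).1| ≤ 1 ∧ |(η x).2| ≤ 1) ∧
    t = ENNReal.ofReal (∫ x in Ω, u x * div2 η x) }

/-- The anisotropic perimeter `Per₁(E;Ω)`. -/
def Per1 (E Ω : Set (ℝ × ℝ)) : ℝ≥0∞ := anisoTV Ω (E.indicator 1)

/-- The anisotropic Rudin–Osher–Fatemi functional. -/
def AROF (Ω : Set (ℝ × ℝ)) (f : ℝ × ℝ → ℝ) (lam : ℝ) (u : ℝ × ℝ → ℝ) : ℝ≥0∞ :=
  anisoTV Ω u + ENNReal.ofReal (lam / 2 * ∫ x in Ω, (u x - f x) ^ 2)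

open scoped Classical in
/-- The generalized two-phase anisotropic Chan–Vese functional `G_μ`. -/
def Gfun (Ω : Set (ℝ × ℝ)) (f : ℝ × ℝ → ℝ) (μ : ℝ) (u : ℝ × ℝ → ℝ) (c₁ c₂ : ℝ) : ℝ≥0∞ :=
  anisoTV Ω u
    + ENNReal.ofReal (μ * ∫ x in Ω, (u x * (c₁ - f x) ^ 2 + (1 - u x) * (c₂ - f x) ^ 2))
    + (if ∀ᵐ x ∂(volume.restrict Ω), u x ∈ Icc (0 : ℝ) 1 then 0 else ⊤)

/-- The two-phase anisotropic Chan–Vese functional `ACV_μ`. -/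
def ACV (Ω : Set (ℝ × ℝ)) (f : ℝ × ℝ → ℝ) (μ : ℝ) (Λ : Set (ℝ × ℝ)) (c₁ c₂ : ℝ) : ℝ≥0∞ :=
  Per1 Λ Ω + ENNReal.ofReal (μ * ((∫ x in Λ, (c₁ - f x) ^ 2) + ∫ x in Ω \ Λ, (c₂ - f x) ^ 2))

/-- An axis-parallel closed rectangle. -/
def IsRectangle (R : Set (ℝ × ℝ)) : Prop :=
  ∃ a b c d : ℝ, R = Set.Icc a b ×ˢ Set.Icc c d

/-- A rectilinear polygon: a finite union of axis-parallel rectangles. -/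
def IsRectilinear (E : Set (ℝ × ℝ)) : Prop :=
  ∃ (n : ℕ) (R : Fin n → Set (ℝ × ℝ)), (∀ i, IsRectangle (R i)) ∧ E = ⋃ i, R i

/-- `f` is piecewise constant on rectangles on `Ω`. -/
def PCR (Ω : Set (ℝ × ℝ)) (f : ℝ × ℝ → ℝ) : Prop :=
  ∃ S : Finset ℝ, (∀ᵐ x ∂(volume.restrict Ω), f x ∈ (S : Set ℝ)) ∧
    ∀ c ∈ S, ∃ P : Set (ℝ × ℝ), IsRectilinear P ∧
      volume (({x ∈ Ω | f x = c} \ P) ∪ (P \ {x ∈ Ω | f x = c})) = 0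

/-- `Ω` is a bounded open rectangle. -/
def IsOpenRectangle (Ω : Set (ℝ × ℝ)) : Prop :=
  ∃ a b c d : ℝ, a < b ∧ c < d ∧ Ω = Set.Ioo a b ×ˢ Set.Ioo c d


noncomputable section

/-- The multiphase anisotropic Chan–Vese functional
`CV^n_{1,μ}({Ωᵢ}, c) = Σᵢ ( Per₁(∪_{j≤i} Ω_j; Ω) + μᵢ ∫_{Ωᵢ} (cᵢ − f)² )`. -/
def CVn (Ω : Set (ℝ × ℝ)) (f : ℝ × ℝ → ℝ) (n : ℕ)
    (P : Fin n → Set (ℝ × ℝ)) (c μ : Fin n → ℝ) : ℝ≥0∞ :=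
  ∑ i : Fin n,
    (Per1 (⋃ j : Fin n, ⋃ (_ : j ≤ i), P j) Ω
      + ENNReal.ofReal (μ i * ∫ x in P i, (c i - f x) ^ 2))

/-- A partition of `Ω` into `n` pairwise disjoint nonempty measurable parts
(with union `Ω` up to a Lebesgue-null set). -/
def IsPartition (Ω : Set (ℝ × ℝ)) (n : ℕ) (P : Fin n → Set (ℝ × ℝ)) : Prop :=
  (∀ i, MeasurableSet (P i)) ∧ (∀ i, (P i).Nonempty) ∧ (∀ i, P i ⊆ Ω) ∧
    Pairwise (Function.onFun Disjoint P) ∧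
    volume ((Ω \ ⋃ i, P i) ∪ ((⋃ i, P i) \ Ω)) = 0

end

noncomputable section CVhelpers

/-- plateau function: `1` on `[a,b]`, `0` outside `(a-1/2, b+1/2)`, values in `[0,1]`. -/
def pl (a b x : ℝ) : ℝ :=
  Real.smoothTransition (2*(x - a) + 1) * Real.smoothTransition (2*(b - x) + 1)

/-- ramp: `-1` at `a`, `1` at `b`, values in `[-1,1]`. -/
def rp (a b x : ℝ) : ℝ := 2 * Real.smoothTransition ((x - a)/(b - a)) - 1

/-- combined: `-1` at `a`, `1` at `b`, `0` outside `(a-1/2,b+1/2)`, `|fF| ≤ 1`. -/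
def fF (a b x : ℝ) : ℝ := pl a b x * rp a b x

lemma pl_contDiff (a b : ℝ) : ContDiff ℝ ((⊤:ℕ∞):WithTop ℕ∞) (pl a b) := by
  have h1 : ContDiff ℝ ((⊤:ℕ∞):WithTop ℕ∞) (fun x : ℝ => 2*(x - a) + 1) := by fun_prop
  have h2 : ContDiff ℝ ((⊤:ℕ∞):WithTop ℕ∞) (fun x : ℝ => 2*(b - x) + 1) := by fun_prop
  exact (Real.smoothTransition.contDiff.comp h1).mul (Real.smoothTransition.contDiff.comp h2)

lemma rp_contDiff (a b : ℝ) : ContDiff ℝ ((⊤:ℕ∞):WithTop ℕ∞) (rp a b) := by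
  have h1 : ContDiff ℝ ((⊤:ℕ∞):WithTop ℕ∞) (fun x : ℝ => (x - a)/(b - a)) := by
    simp only [div_eq_mul_inv]; fun_prop
  exact (contDiff_const.mul (Real.smoothTransition.contDiff.comp h1)).sub contDiff_const

lemma fF_contDiff (a b : ℝ) : ContDiff ℝ ((⊤:ℕ∞):WithTop ℕ∞) (fF a b) := (pl_contDiff a b).mul (rp_contDiff a b)

lemma pl_nonneg (a b x : ℝ) : 0 ≤ pl a b x :=
  mul_nonneg (Real.smoothTransition.nonneg _) (Real.smoothTransition.nonneg _)

lemma pl_le_one (a b x : ℝ) : pl a b x ≤ 1 :=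
  mul_le_one₀ (Real.smoothTransition.le_one _) (Real.smoothTransition.nonneg _)
    (Real.smoothTransition.le_one _)

lemma abs_pl_le_one (a b x : ℝ) : |pl a b x| ≤ 1 := by
  rw [abs_of_nonneg (pl_nonneg a b x)]; exact pl_le_one a b x

lemma pl_eq_one {a b x : ℝ} (h1 : a ≤ x) (h2 : x ≤ b) : pl a b x = 1 := by
  unfold pl
  rw [Real.smoothTransition.one_of_one_le (by linarith),
    Real.smoothTransition.one_of_one_le (by linarith), mul_one]

lemma pl_eq_zero_left {a b x : ℝ} (h : x ≤ a - 1/2) : pl a b x = 0 := by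
  unfold pl
  rw [Real.smoothTransition.zero_of_nonpos (show 2*(x - a) + 1 ≤ 0 by linarith), zero_mul]

lemma pl_eq_zero_right {a b x : ℝ} (h : b + 1/2 ≤ x) : pl a b x = 0 := by
  unfold pl
  rw [Real.smoothTransition.zero_of_nonpos (show 2*(b - x) + 1 ≤ 0 by linarith), mul_zero]

lemma pl_ne_zero {a b x : ℝ} (h : pl a b x ≠ 0) : a - 1/2 < x ∧ x < b + 1/2 := by
  constructor
  · by_contra hc; exact h (pl_eq_zero_left (by linarith))
  · by_contra hc; exact h (pl_eq_zero_right (by linarith))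

lemma abs_rp_le_one (a b x : ℝ) : |rp a b x| ≤ 1 := by
  rw [abs_le]
  constructor
  · have := Real.smoothTransition.nonneg ((x - a)/(b - a)); unfold rp; linarith
  · have := Real.smoothTransition.le_one ((x - a)/(b - a)); unfold rp; linarith

lemma rp_left {a b : ℝ} : rp a b a = -1 := by
  unfold rp
  rw [sub_self, zero_div, Real.smoothTransition.zero]; ring

lemma rp_right {a b : ℝ} (h : a < b) : rp a b b = 1 := by
  unfold rp
  rw [div_self (by linarith : b - a ≠ 0), Real.smoothTransition.one]; ring

lemma fF_left {a b : ℝ} (h : a < b) : fF a b a = -1 := by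
  unfold fF; rw [pl_eq_one le_rfl h.le, rp_left, one_mul]

lemma fF_right {a b : ℝ} (h : a < b) : fF a b b = 1 := by
  unfold fF; rw [pl_eq_one h.le le_rfl, rp_right h, one_mul]

lemma abs_fF_le_one (a b x : ℝ) : |fF a b x| ≤ 1 := by
  unfold fF
  rw [abs_mul]
  exact mul_le_one₀ (abs_pl_le_one a b x) (abs_nonneg _) (abs_rp_le_one a b x)

lemma fF_eq_zero_left {a b x : ℝ} (h : x ≤ a - 1/2) : fF a b x = 0 := by
  unfold fF; rw [pl_eq_zero_left h, zero_mul]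

lemma fF_eq_zero_right {a b x : ℝ} (h : b + 1/2 ≤ x) : fF a b x = 0 := by
  unfold fF; rw [pl_eq_zero_right h, zero_mul]

lemma fF_ne_zero {a b x : ℝ} (h : fF a b x ≠ 0) : a - 1/2 < x ∧ x < b + 1/2 := by
  refine pl_ne_zero fun hc => h ?_
  unfold fF; rw [hc, zero_mul]


lemma icc_diff_null (a b : ℝ) : volume (Icc a b \ Ioo a b) = 0 := by
  apply measure_mono_null (show Icc a b \ Ioo a b ⊆ {a, b} by
    intro x hx
    rcases hx with ⟨⟨h1, h2⟩, h3⟩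
    simp only [mem_Ioo, not_and_or, not_lt] at h3
    simp only [mem_insert_iff, mem_singleton_iff]
    rcases h3 with h | h
    · exact Or.inl (le_antisymm h h1)
    · exact Or.inr (le_antisymm h2 h))
  exact ((Set.finite_singleton b).insert a).measure_zero _

lemma frame_null (a b c d : ℝ) :
    volume ((Icc a b ×ˢ Icc c d : Set (ℝ × ℝ)) \ Ioo a b ×ˢ Ioo c d) = 0 := by
  apply measure_mono_null (show (Icc a b ×ˢ Icc c d : Set (ℝ × ℝ)) \ Ioo a b ×ˢ Ioo c d
      ⊆ ((Icc a b \ Ioo a b) ×ˢ Icc c d) ∪ (Icc a b ×ˢ (Icc c d \ Ioo c d)) by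
    rintro ⟨x, y⟩ ⟨⟨hx, hy⟩, hne⟩
    simp only [mem_prod, not_and_or] at hne
    rcases hne with h | h
    · exact Or.inl ⟨⟨hx, h⟩, hy⟩
    · exact Or.inr ⟨hx, hy, h⟩)
  apply measure_union_null <;>
    rw [Measure.volume_eq_prod, Measure.prod_prod] <;>
    simp [icc_diff_null]

lemma prodIoo_ae_Icc (a b c d : ℝ) :
    (Ioo a b ×ˢ Ioo c d : Set (ℝ × ℝ)) =ᵐ[volume] (Icc a b ×ˢ Icc c d : Set (ℝ × ℝ)) := by
  rw [MeasureTheory.ae_eq_set]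
  constructor
  · apply measure_mono_null (t := (∅ : Set (ℝ × ℝ)))
    · rw [Set.subset_empty_iff, Set.diff_eq_empty]
      exact Set.prod_mono Ioo_subset_Icc_self Ioo_subset_Icc_self
    · exact measure_empty
  · exact frame_null a b c d

lemma volume_prodIoo (a b c d : ℝ) :
    volume (Ioo a b ×ˢ Ioo c d : Set (ℝ × ℝ)) = ENNReal.ofReal (b - a) * ENNReal.ofReal (d - c) := by
  rw [Measure.volume_eq_prod, Measure.prod_prod, Real.volume_Ioo, Real.volume_Ioo]

lemma setIntegral_prod_mul'' (f g : ℝ → ℝ) (s t : Set ℝ) :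
    ∫ z in (s ×ˢ t : Set (ℝ × ℝ)), f z.1 * g z.2 = (∫ x in s, f x) * ∫ y in t, g y := by
  rw [Measure.volume_eq_prod, ← Measure.prod_restrict, MeasureTheory.integral_prod_mul]

lemma integral_Ioo_deriv {F : ℝ → ℝ} (hF : ContDiff ℝ ((⊤:ℕ∞):WithTop ℕ∞) F) {a b : ℝ}
    (hab : a ≤ b) : ∫ x in Ioo a b, deriv F x = F b - F a := by
  rw [← integral_Ioc_eq_integral_Ioo, ← intervalIntegral.integral_of_le hab]
  apply intervalIntegral.integral_deriv_eq_sub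
  · intro x _
    exact (hF.differentiable (by simp)).differentiableAt
  · exact (hF.continuous_deriv (by exact_mod_cast le_top)).intervalIntegrable _ _

lemma integral_Ioo_pl {c d : ℝ} (h : c ≤ d) : ∫ y in Ioo c d, pl c d y = d - c := by
  rw [setIntegral_congr_fun measurableSet_Ioo
    (fun y hy => pl_eq_one (le_of_lt hy.1) (le_of_lt hy.2))]
  simp [Real.volume_Ioo, ENNReal.toReal_ofReal (by linarith : (0:ℝ) ≤ d - c), h]

lemma fderiv_mul_prod_apply (φ ψ : ℝ → ℝ) (hφ : Differentiable ℝ φ) (hψ : Differentiable ℝ ψ)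
    (p : ℝ × ℝ) (v : ℝ × ℝ) :
    fderiv ℝ (fun y : ℝ × ℝ => φ y.1 * ψ y.2) p v
      = deriv φ p.1 * ψ p.2 * v.1 + φ p.1 * deriv ψ p.2 * v.2 := by
  have hc : HasFDerivAt (fun y : ℝ × ℝ => φ y.1)
      (((1 : ℝ →L[ℝ] ℝ).smulRight (deriv φ p.1)).comp (ContinuousLinearMap.fst ℝ ℝ ℝ)) p :=
    (hφ p.1).hasDerivAt.hasFDerivAt.comp p hasFDerivAt_fst
  have hd : HasFDerivAt (fun y : ℝ × ℝ => ψ y.2)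
      (((1 : ℝ →L[ℝ] ℝ).smulRight (deriv ψ p.2)).comp (ContinuousLinearMap.snd ℝ ℝ ℝ)) p :=
    (hψ p.2).hasDerivAt.hasFDerivAt.comp p hasFDerivAt_snd
  rw [show (fun y : ℝ × ℝ => φ y.1 * ψ y.2) = (fun y => φ y.1) * (fun y => ψ y.2) from rfl,
    (hc.mul hd).fderiv]
  simp only [ContinuousLinearMap.add_apply, ContinuousLinearMap.coe_smul', Pi.smul_apply,
    ContinuousLinearMap.coe_comp', Function.comp_apply, ContinuousLinearMap.coe_fst',
    ContinuousLinearMap.coe_snd', ContinuousLinearMap.smulRight_apply,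
    ContinuousLinearMap.one_apply, smul_eq_mul]
  ring

lemma differentiableAt_mul_prod (φ ψ : ℝ → ℝ) (hφ : Differentiable ℝ φ)
    (hψ : Differentiable ℝ ψ) (p : ℝ × ℝ) :
    DifferentiableAt ℝ (fun y : ℝ × ℝ => φ y.1 * ψ y.2) p := by
  apply DifferentiableAt.mul
  · exact (hφ p.1).comp p differentiableAt_fst
  · exact (hψ p.2).comp p differentiableAt_snd

lemma div2_continuous {η : ℝ × ℝ → ℝ × ℝ} (hη : ContDiff ℝ 1 η) : Continuous (div2 η) := by
  apply Continuous.add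
  · exact (ContinuousLinearMap.apply ℝ ℝ ((1:ℝ),(0:ℝ))).continuous.comp
      ((contDiff_fst.comp hη).continuous_fderiv one_ne_zero)
  · exact (ContinuousLinearMap.apply ℝ ℝ ((0:ℝ),(1:ℝ))).continuous.comp
      ((contDiff_snd.comp hη).continuous_fderiv one_ne_zero)

lemma abs_sum_le_one {n : ℕ} (t : Fin n → ℝ) (h1 : ∀ i, |t i| ≤ 1)
    (h2 : ∀ i j, i ≠ j → t i = 0 ∨ t j = 0) : |∑ i, t i| ≤ 1 := by
  by_cases h : ∀ i, t i = 0
  · simp [h]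
  · push_neg at h
    obtain ⟨i, hi⟩ := h
    rw [Finset.sum_eq_single i
      (fun j _ hj => (h2 j i hj).resolve_right hi)
      (fun h => absurd (Finset.mem_univ i) h)]
    exact h1 i

section PerRect
open ENNReal

variable {n : ℕ} (a b c d : Fin n → ℝ)

/-- The near-optimal vector field for the union of rectangles. -/
def etaF (x : ℝ × ℝ) : ℝ × ℝ :=
  (∑ i, fF (a i) (b i) x.1 * pl (c i) (d i) x.2,
   ∑ i, pl (a i) (b i) x.1 * fF (c i) (d i) x.2)

lemma contDiff_one_of_top {f : ℝ → ℝ} (h : ContDiff ℝ ((⊤:ℕ∞):WithTop ℕ∞) f) :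
    ContDiff ℝ 1 f := h.of_le (by exact_mod_cast le_top)

lemma etaF_contDiff : ContDiff ℝ 1 (etaF a b c d) := by
  apply ContDiff.prodMk <;> apply ContDiff.sum <;> intro i _
  · exact ((contDiff_one_of_top (fF_contDiff _ _)).comp contDiff_fst).mul
      ((contDiff_one_of_top (pl_contDiff _ _)).comp contDiff_snd)
  · exact ((contDiff_one_of_top (pl_contDiff _ _)).comp contDiff_fst).mul
      ((contDiff_one_of_top (fF_contDiff _ _)).comp contDiff_snd)

variable (hsep : ∀ i j : Fin n, i ≠ j → d i + 1 ≤ c j ∨ d j + 1 ≤ c i)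

include hsep in
lemma sep_pl {i j : Fin n} (hij : i ≠ j) {y : ℝ} (hi : pl (c i) (d i) y ≠ 0) :
    pl (c j) (d j) y = 0 := by
  by_contra hj
  obtain ⟨h1, h2⟩ := pl_ne_zero hi
  obtain ⟨h3, h4⟩ := pl_ne_zero hj
  rcases hsep i j hij with h | h <;> linarith

include hsep in
lemma etaF_bound (x : ℝ × ℝ) : |(etaF a b c d x).1| ≤ 1 ∧ |(etaF a b c d x).2| ≤ 1 := by
  constructor
  · apply abs_sum_le_one
    · intro i
      rw [abs_mul]
      exact mul_le_one₀ (abs_fF_le_one _ _ _) (abs_nonneg _) (abs_pl_le_one _ _ _)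
    · intro i j hij
      by_contra hc
      push_neg at hc
      obtain ⟨hi, hj⟩ := hc
      rw [mul_ne_zero_iff] at hi hj
      exact hj.2 (sep_pl c d hsep hij hi.2)
  · apply abs_sum_le_one
    · intro i
      rw [abs_mul]
      exact mul_le_one₀ (abs_pl_le_one _ _ _) (abs_nonneg _) (abs_fF_le_one _ _ _)
    · intro i j hij
      by_contra hc
      push_neg at hc
      obtain ⟨hi, hj⟩ := hc
      rw [mul_ne_zero_iff] at hi hj
      have hi2 : pl (c i) (d i) x.2 ≠ 0 := fun h => hi.2 (by unfold fF; rw [h, zero_mul])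
      have hj2 : pl (c j) (d j) x.2 ≠ 0 := fun h => hj.2 (by unfold fF; rw [h, zero_mul])
      exact hj2 (sep_pl c d hsep hij hi2)

/-- Fattened closed rectangles. -/
def fatR (i : Fin n) : Set (ℝ × ℝ) :=
  Icc (a i - 1/2) (b i + 1/2) ×ˢ Icc (c i - 1/2) (d i + 1/2)

lemma etaF_zero {x : ℝ × ℝ} (hx : x ∉ ⋃ i, fatR a b c d i) : etaF a b c d x = 0 := by
  simp only [mem_iUnion, not_exists, fatR, mem_prod, not_and_or, mem_Icc, not_and, not_le] at hx
  have key : ∀ i : Fin n,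
      (fF (a i) (b i) x.1 = 0 ∧ pl (a i) (b i) x.1 = 0) ∨
      (pl (c i) (d i) x.2 = 0 ∧ fF (c i) (d i) x.2 = 0) := by
    intro i
    rcases hx i with h | h
    · left
      rcases h with h1 | h1
      · exact ⟨fF_eq_zero_left (by linarith), pl_eq_zero_left (by linarith)⟩
      · exact ⟨fF_eq_zero_right (by linarith), pl_eq_zero_right (by linarith)⟩
    · right
      rcases h with h1 | h1
      · exact ⟨pl_eq_zero_left (by linarith), fF_eq_zero_left (by linarith)⟩
      · exact ⟨pl_eq_zero_right (by linarith), fF_eq_zero_right (by linarith)⟩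
  unfold etaF
  rw [Prod.ext_iff]
  constructor <;> simp only <;> apply Finset.sum_eq_zero <;> intro i _
  · rcases key i with h | h
    · rw [h.1, zero_mul]
    · rw [h.1, mul_zero]
  · rcases key i with h | h
    · rw [h.2, zero_mul]
    · rw [h.2, mul_zero]

lemma etaF_hcs : HasCompactSupport (etaF a b c d) := by
  apply HasCompactSupport.intro (K := ⋃ i, fatR a b c d i)
  · exact isCompact_iUnion fun i => (isCompact_Icc.prod isCompact_Icc)
  · exact fun x hx => etaF_zero a b c d hx

lemma etaF_tsupport {Ω : Set (ℝ × ℝ)} (hΩ : ∀ i, fatR a b c d i ⊆ Ω) :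
    tsupport (etaF a b c d) ⊆ Ω := by
  have hcl : IsClosed (⋃ i, fatR a b c d i) :=
    isClosed_iUnion_of_finite fun i => (isClosed_Icc.prod isClosed_Icc)
  refine subset_trans (closure_minimal ?_ hcl) (iUnion_subset hΩ)
  intro x hx
  by_contra hc
  exact hx (etaF_zero a b c d hc)

lemma integrableOn_prodIoo {g : ℝ × ℝ → ℝ} (hg : Continuous g) (p q r s : ℝ) :
    IntegrableOn g (Ioo p q ×ˢ Ioo r s) := by
  have h := hg.integrableOn_Icc (a := ((p, r) : ℝ × ℝ)) (b := ((q, s) : ℝ × ℝ)) (μ := volume)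
  apply h.mono_set
  rw [← Icc_prod_Icc]
  exact Set.prod_mono Ioo_subset_Icc_self Ioo_subset_Icc_self

lemma div2_etaF (p : ℝ × ℝ) :
    div2 (etaF a b c d) p
      = (∑ i, deriv (fF (a i) (b i)) p.1 * pl (c i) (d i) p.2)
        + ∑ i, pl (a i) (b i) p.1 * deriv (fF (c i) (d i)) p.2 := by
  have dfF : ∀ u v : ℝ, Differentiable ℝ (fF u v) :=
    fun u v => (contDiff_one_of_top (fF_contDiff u v)).differentiable one_ne_zero
  have dpl : ∀ u v : ℝ, Differentiable ℝ (pl u v) :=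
    fun u v => (contDiff_one_of_top (pl_contDiff u v)).differentiable one_ne_zero
  have h1 : (fun y : ℝ × ℝ => (etaF a b c d y).1)
      = fun y : ℝ × ℝ => ∑ i, fF (a i) (b i) y.1 * pl (c i) (d i) y.2 := rfl
  have h2 : (fun y : ℝ × ℝ => (etaF a b c d y).2)
      = fun y : ℝ × ℝ => ∑ i, pl (a i) (b i) y.1 * fF (c i) (d i) y.2 := rfl
  unfold div2
  rw [h1, h2,
    fderiv_fun_sum (fun i _ => differentiableAt_mul_prod _ _ (dfF (a i) (b i)) (dpl (c i) (d i)) p),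
    fderiv_fun_sum (fun i _ => differentiableAt_mul_prod _ _ (dpl (a i) (b i)) (dfF (c i) (d i)) p),
    ContinuousLinearMap.sum_apply, ContinuousLinearMap.sum_apply]
  congr 1
  · refine Finset.sum_congr rfl fun i _ => ?_
    rw [fderiv_mul_prod_apply _ _ (dfF (a i) (b i)) (dpl (c i) (d i))]
    norm_num
  · refine Finset.sum_congr rfl fun i _ => ?_
    rw [fderiv_mul_prod_apply _ _ (dpl (a i) (b i)) (dfF (c i) (d i))]
    norm_num

lemma continuous_deriv_fF (u v : ℝ) : Continuous (deriv (fF u v)) :=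
  (fF_contDiff u v).continuous_deriv (by exact_mod_cast le_top)

include hsep in
lemma integral_rect_div2_etaF (hab : ∀ i, a i < b i) (hcd : ∀ i, c i < d i) (j : Fin n) :
    ∫ x in Ioo (a j) (b j) ×ˢ Ioo (c j) (d j), div2 (etaF a b c d) x
      = 2*(b j - a j) + 2*(d j - c j) := by
  have hc1 : ∀ i : Fin n,
      Continuous fun x : ℝ × ℝ => deriv (fF (a i) (b i)) x.1 * pl (c i) (d i) x.2 :=
    fun i => ((continuous_deriv_fF _ _).comp continuous_fst).mul
      (((pl_contDiff _ _).continuous).comp continuous_snd)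
  have hc2 : ∀ i : Fin n,
      Continuous fun x : ℝ × ℝ => pl (a i) (b i) x.1 * deriv (fF (c i) (d i)) x.2 :=
    fun i => (((pl_contDiff _ _).continuous).comp continuous_fst).mul
      ((continuous_deriv_fF _ _).comp continuous_snd)
  simp only [div2_etaF]
  rw [MeasureTheory.integral_add
    ((integrableOn_prodIoo (continuous_finset_sum _ fun i _ => hc1 i) _ _ _ _))
    ((integrableOn_prodIoo (continuous_finset_sum _ fun i _ => hc2 i) _ _ _ _)),
    MeasureTheory.integral_finset_sum _ (fun i _ => integrableOn_prodIoo (hc1 i) _ _ _ _),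
    MeasureTheory.integral_finset_sum _ (fun i _ => integrableOn_prodIoo (hc2 i) _ _ _ _)]
  have e1 : ∀ i : Fin n,
      (∫ x in Ioo (a j) (b j) ×ˢ Ioo (c j) (d j), deriv (fF (a i) (b i)) x.1 * pl (c i) (d i) x.2)
      = (∫ x in Ioo (a j) (b j), deriv (fF (a i) (b i)) x) * ∫ y in Ioo (c j) (d j), pl (c i) (d i) y :=
    fun i => setIntegral_prod_mul'' _ _ _ _
  have e2 : ∀ i : Fin n,
      (∫ x in Ioo (a j) (b j) ×ˢ Ioo (c j) (d j), pl (a i) (b i) x.1 * deriv (fF (c i) (d i)) x.2)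
      = (∫ x in Ioo (a j) (b j), pl (a i) (b i) x) * ∫ y in Ioo (c j) (d j), deriv (fF (c i) (d i)) y :=
    fun i => setIntegral_prod_mul'' _ _ _ _
  simp only [e1, e2]
  rw [Finset.sum_eq_single j, Finset.sum_eq_single j]
  · rw [integral_Ioo_deriv (fF_contDiff _ _) (hab j).le, integral_Ioo_pl (hcd j).le,
      integral_Ioo_deriv (fF_contDiff _ _) (hcd j).le, integral_Ioo_pl (hab j).le,
      fF_left (hab j), fF_right (hab j), fF_left (hcd j), fF_right (hcd j)]
    ring
  · -- second sum, i ≠ j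
    intro i _ hij
    rw [integral_Ioo_deriv (fF_contDiff _ _) (hcd j).le]
    have : fF (c i) (d i) (d j) - fF (c i) (d i) (c j) = 0 := by
      rcases hsep i j hij with h | h
      · have hcdj := hcd j
        rw [fF_eq_zero_right (by linarith), fF_eq_zero_right (by linarith : d i + 1/2 ≤ c j)]
        ring
      · have hcdj := hcd j
        rw [fF_eq_zero_left (by linarith), fF_eq_zero_left (by linarith : c j ≤ c i - 1/2)]
        ring
    rw [this, mul_zero]
  · intro h; exact absurd (Finset.mem_univ j) h
  · -- first sum, i ≠ j
    intro i _ hij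
    have : (∫ y in Ioo (c j) (d j), pl (c i) (d i) y) = 0 := by
      rw [setIntegral_congr_fun measurableSet_Ioo (g := fun _ => (0:ℝ))]
      · exact integral_zero _ _
      · intro y hy
        rcases hsep i j hij with h | h
        · exact pl_eq_zero_right (by rcases hy with ⟨h1, _⟩; linarith)
        · exact pl_eq_zero_left (by rcases hy with ⟨_, h2⟩; linarith)
    rw [this, mul_zero]
  · intro h; exact absurd (Finset.mem_univ j) h

lemma integral_rect_div2_le {η : ℝ × ℝ → ℝ × ℝ} (hη : ContDiff ℝ 1 η)
    (hb : ∀ x, |(η x).1| ≤ 1 ∧ |(η x).2| ≤ 1) {p q r s : ℝ} (hpq : p ≤ q) (hrs : r ≤ s) :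
    ∫ x in Ioo p q ×ˢ Ioo r s, div2 η x ≤ 2*(q - p) + 2*(s - r) := by
  have hf : ContDiff ℝ 1 fun y : ℝ × ℝ => (η y).1 := contDiff_fst.comp hη
  have hg : ContDiff ℝ 1 fun y : ℝ × ℝ => (η y).2 := contDiff_snd.comp hη
  have hIcc : ∫ x in Ioo p q ×ˢ Ioo r s, div2 η x
      = ∫ x in Icc ((p, r) : ℝ × ℝ) ((q, s) : ℝ × ℝ), div2 η x := by
    rw [setIntegral_congr_set (prodIoo_ae_Icc p q r s), Icc_prod_Icc]
  have hdiv := MeasureTheory.integral_divergence_prod_Icc_of_hasFDerivAt_off_countable_of_le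
    (fun y => (η y).1) (fun y => (η y).2)
    (fun x => fderiv ℝ (fun y : ℝ × ℝ => (η y).1) x) (fun x => fderiv ℝ (fun y : ℝ × ℝ => (η y).2) x)
    ((p, r)) ((q, s)) ⟨hpq, hrs⟩ ∅ countable_empty
    (hf.continuous.continuousOn) (hg.continuous.continuousOn)
    (fun x _ => ((hf.differentiable one_ne_zero) x).hasFDerivAt)
    (fun x _ => ((hg.differentiable one_ne_zero) x).hasFDerivAt)
    ((div2_continuous hη).integrableOn_Icc)
  rw [hIcc]
  have hsame : (∫ x in Icc ((p, r) : ℝ × ℝ) ((q, s) : ℝ × ℝ), div2 η x)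
      = ∫ x in Icc ((p, r) : ℝ × ℝ) ((q, s) : ℝ × ℝ),
          (fderiv ℝ (fun y : ℝ × ℝ => (η y).1) x) (1, 0)
          + (fderiv ℝ (fun y : ℝ × ℝ => (η y).2) x) (0, 1) := rfl
  rw [hsame, hdiv]
  have key : ∀ (u v : ℝ) (h : ℝ → ℝ), u ≤ v → (∀ x, |h x| ≤ 1) →
      |∫ x in u..v, h x| ≤ v - u := by
    intro u v h huv hh
    have := intervalIntegral.norm_integral_le_of_norm_le_const (C := 1) (f := h) (a := u) (b := v)
      (fun x _ => by rw [Real.norm_eq_abs]; exact hh x)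
    rw [Real.norm_eq_abs] at this
    calc |∫ x in u..v, h x| ≤ 1 * |v - u| := this
      _ = v - u := by rw [abs_of_nonneg (by linarith : (0:ℝ) ≤ v - u)]; ring
  have k1 := key p q (fun x => (η (x, s)).2) hpq (fun x => (hb _).2)
  have k2 := key p q (fun x => (η (x, r)).2) hpq (fun x => (hb _).2)
  have k3 := key r s (fun y => (η (q, y)).1) hrs (fun y => (hb _).1)
  have k4 := key r s (fun y => (η (p, y)).1) hrs (fun y => (hb _).1)
  rw [abs_le] at k1 k2 k3 k4
  linarith [k1.1, k1.2, k2.1, k2.2, k3.1, k3.2, k4.1, k4.2]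

include hsep in
lemma Per1_rects (hab : ∀ i, a i < b i) (hcd : ∀ i, c i < d i)
    {Ω : Set (ℝ × ℝ)} (hΩ : ∀ i, fatR a b c d i ⊆ Ω) :
    Per1 (⋃ i, Ioo (a i) (b i) ×ˢ Ioo (c i) (d i)) Ω
      = ENNReal.ofReal (∑ i, (2*(b i - a i) + 2*(d i - c i))) := by
  set E : Set (ℝ × ℝ) := ⋃ i, Ioo (a i) (b i) ×ˢ Ioo (c i) (d i) with hEdef
  have hEm : MeasurableSet E := MeasurableSet.iUnion fun i =>
    measurableSet_Ioo.prod measurableSet_Ioo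
  have hEsub : E ⊆ Ω := iUnion_subset fun i =>
    subset_trans (Set.prod_mono
      (Ioo_subset_Icc_self.trans (Icc_subset_Icc (by linarith) (by linarith)))
      (Ioo_subset_Icc_self.trans (Icc_subset_Icc (by linarith) (by linarith)))) (hΩ i)
  have hdisj : Pairwise (Function.onFun Disjoint
      fun i => (Ioo (a i) (b i) ×ˢ Ioo (c i) (d i) : Set (ℝ × ℝ))) := by
    intro i j hij
    simp only [Function.onFun]
    rw [Set.disjoint_left]
    rintro ⟨x, y⟩ ⟨_, hy1⟩ ⟨_, hy2⟩
    simp only [mem_Ioo] at hy1 hy2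
    rcases hsep i j hij with h | h
    · linarith [hy1.2, hy2.1]
    · linarith [hy2.2, hy1.1]
  have hred : ∀ η : ℝ × ℝ → ℝ × ℝ, ContDiff ℝ 1 η →
      (∫ x in Ω, E.indicator 1 x * div2 η x)
        = ∑ j, ∫ x in Ioo (a j) (b j) ×ˢ Ioo (c j) (d j), div2 η x := by
    intro η hη
    have hpt : ∀ x, E.indicator (1 : ℝ × ℝ → ℝ) x * div2 η x = E.indicator (div2 η) x := by
      intro x; by_cases hx : x ∈ E <;> simp [hx]
    simp_rw [hpt]
    rw [setIntegral_indicator hEm, Set.inter_eq_self_of_subset_right hEsub]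
    have hE' : E = ⋃ i ∈ Finset.univ, Ioo (a i) (b i) ×ˢ Ioo (c i) (d i) := by
      simp [hEdef]
    rw [hE', MeasureTheory.integral_biUnion_finset Finset.univ
      (fun i _ => measurableSet_Ioo.prod measurableSet_Ioo)
      (fun i _ j _ hij => hdisj hij)
      (fun i _ => integrableOn_prodIoo (div2_continuous hη) _ _ _ _)]
  unfold Per1 anisoTV
  apply le_antisymm
  · apply sSup_le
    rintro t ⟨η, hη, hcs, hsup, hbd, rfl⟩
    rw [hred η hη]
    apply ENNReal.ofReal_le_ofReal
    apply Finset.sum_le_sum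
    intro j _
    exact integral_rect_div2_le hη hbd (hab j).le (hcd j).le
  · apply le_sSup
    refine ⟨etaF a b c d, etaF_contDiff a b c d, etaF_hcs a b c d,
      etaF_tsupport a b c d hΩ, etaF_bound a b c d hsep, ?_⟩
    rw [hred _ (etaF_contDiff a b c d)]
    congr 1
    exact (Finset.sum_congr rfl fun j _ =>
      integral_rect_div2_etaF a b c d hsep hab hcd j).symm

end PerRect

lemma Per1_full {RR : ℝ} (hRR : 0 ≤ RR) {U : Set (ℝ × ℝ)}
    (hU : U ⊆ Ioo (-RR) RR ×ˢ Ioo (-RR) RR)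
    (hnull : volume ((Ioo (-RR) RR ×ˢ Ioo (-RR) RR : Set (ℝ × ℝ)) \ U) = 0) :
    Per1 U (Ioo (-RR) RR ×ˢ Ioo (-RR) RR) = 0 := by
  set Ω : Set (ℝ × ℝ) := Ioo (-RR) RR ×ˢ Ioo (-RR) RR with hΩdef
  have hΩm : MeasurableSet Ω := measurableSet_Ioo.prod measurableSet_Ioo
  unfold Per1 anisoTV
  apply le_antisymm _ (zero_le)
  apply sSup_le
  rintro t ⟨η, hη, hcs, hsup, hbd, rfl⟩
  have hzero : ∀ x : ℝ × ℝ, x ∉ Ω → η x = 0 := by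
    intro x hx
    by_contra hc
    exact hx (hsup (subset_closure (Function.mem_support.mpr hc)))
  have h1 : ∫ x in Ω, U.indicator (1 : ℝ × ℝ → ℝ) x * div2 η x = ∫ x in Ω, div2 η x := by
    apply integral_congr_ae
    have hae : ∀ᵐ x ∂(volume : Measure (ℝ × ℝ)), x ∉ Ω \ U := by
      rw [ae_iff]; simp only [not_not]; exact hnull
    filter_upwards [ae_restrict_of_ae hae, ae_restrict_mem hΩm] with x hx hxΩ
    have hxU : x ∈ U := by by_contra h; exact hx ⟨hxΩ, h⟩
    simp [hxU]
  have hb1 : ∀ x : ℝ, (η (x, RR)).2 = 0 := by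
    intro x; rw [hzero (x, RR) (by simp [hΩdef])]; rfl
  have hb2 : ∀ x : ℝ, (η (x, -RR)).2 = 0 := by
    intro x; rw [hzero (x, -RR) (by simp [hΩdef])]; rfl
  have hb3 : ∀ y : ℝ, (η (RR, y)).1 = 0 := by
    intro y; rw [hzero (RR, y) (by simp [hΩdef])]; rfl
  have hb4 : ∀ y : ℝ, (η (-RR, y)).1 = 0 := by
    intro y; rw [hzero (-RR, y) (by simp [hΩdef])]; rfl
  have h2 : ∫ x in Ω, div2 η x = 0 := by
    have hst : ∫ x in Ω, div2 η x
        = ∫ x in Icc ((-RR, -RR) : ℝ × ℝ) ((RR, RR) : ℝ × ℝ), div2 η x := by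
      rw [hΩdef, setIntegral_congr_set (prodIoo_ae_Icc _ _ _ _), Icc_prod_Icc]
    have hf : ContDiff ℝ 1 fun y : ℝ × ℝ => (η y).1 := contDiff_fst.comp hη
    have hg : ContDiff ℝ 1 fun y : ℝ × ℝ => (η y).2 := contDiff_snd.comp hη
    have hdiv := MeasureTheory.integral_divergence_prod_Icc_of_hasFDerivAt_off_countable_of_le
      (fun y => (η y).1) (fun y => (η y).2)
      (fun x => fderiv ℝ (fun y : ℝ × ℝ => (η y).1) x)
      (fun x => fderiv ℝ (fun y : ℝ × ℝ => (η y).2) x)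
      ((-RR, -RR)) ((RR, RR)) ⟨show -RR ≤ RR by linarith, show -RR ≤ RR by linarith⟩ ∅ countable_empty
      (hf.continuous.continuousOn) (hg.continuous.continuousOn)
      (fun x _ => ((hf.differentiable one_ne_zero) x).hasFDerivAt)
      (fun x _ => ((hg.differentiable one_ne_zero) x).hasFDerivAt)
      ((div2_continuous hη).integrableOn_Icc)
    rw [hst]
    have hsame : (∫ x in Icc ((-RR, -RR) : ℝ × ℝ) ((RR, RR) : ℝ × ℝ), div2 η x)
        = ∫ x in Icc ((-RR, -RR) : ℝ × ℝ) ((RR, RR) : ℝ × ℝ),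
            (fderiv ℝ (fun y : ℝ × ℝ => (η y).1) x) (1, 0)
            + (fderiv ℝ (fun y : ℝ × ℝ => (η y).2) x) (0, 1) := rfl
    rw [hsame, hdiv]
    simp only [hb1, hb2, hb3, hb4, intervalIntegral.integral_zero]
    ring
  rw [h1, h2]
  simp

lemma iUnion_fin_two {α : Type*} (S : Fin 2 → Set α) : (⋃ i, S i) = S 0 ∪ S 1 := by
  ext x; simp [Fin.exists_fin_two]

lemma iUnion_fin_three {α : Type*} (S : Fin 3 → Set α) : (⋃ i, S i) = S 0 ∪ S 1 ∪ S 2 := by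
  ext x
  simp only [mem_iUnion, mem_union]
  constructor
  · rintro ⟨i, h⟩
    fin_cases i
    exacts [Or.inl (Or.inl h), Or.inl (Or.inr h), Or.inr h]
  · rintro ((h | h) | h)
    exacts [⟨0, h⟩, ⟨1, h⟩, ⟨2, h⟩]

lemma biUnion_le_zero3 {α : Type*} (P : Fin 3 → Set α) :
    (⋃ j : Fin 3, ⋃ (_ : j ≤ (0 : Fin 3)), P j) = P 0 := by
  ext x
  simp only [mem_iUnion]
  constructor
  · rintro ⟨j, hj, h⟩
    fin_cases j
    · exact h
    · exact absurd hj (by decide)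
    · exact absurd hj (by decide)
  · intro h; exact ⟨0, le_refl _, h⟩

lemma biUnion_le_one3 {α : Type*} (P : Fin 3 → Set α) :
    (⋃ j : Fin 3, ⋃ (_ : j ≤ (1 : Fin 3)), P j) = P 0 ∪ P 1 := by
  ext x
  simp only [mem_iUnion, mem_union]
  constructor
  · rintro ⟨j, hj, h⟩
    fin_cases j
    · exact Or.inl h
    · exact Or.inr h
    · exact absurd hj (by decide)
  · rintro (h | h)
    exacts [⟨0, by decide, h⟩, ⟨1, le_refl _, h⟩]

lemma biUnion_le_two3 {α : Type*} (P : Fin 3 → Set α) :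
    (⋃ j : Fin 3, ⋃ (_ : j ≤ (2 : Fin 3)), P j) = P 0 ∪ P 1 ∪ P 2 := by
  ext x
  simp only [mem_iUnion, mem_union]
  constructor
  · rintro ⟨j, hj, h⟩
    fin_cases j
    exacts [Or.inl (Or.inl h), Or.inl (Or.inr h), Or.inr h]
  · rintro ((h | h) | h)
    exacts [⟨0, by decide, h⟩, ⟨1, by decide, h⟩, ⟨2, le_refl _, h⟩]

lemma setIntegral_const_of_eqOn {S : Set (ℝ × ℝ)} (hS : MeasurableSet S) {g : ℝ × ℝ → ℝ}
    {k : ℝ} (hg : ∀ x ∈ S, g x = k) : ∫ x in S, g x = (volume S).toReal * k := by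
  rw [setIntegral_congr_fun hS (fun x hx => hg x hx)]
  rw [setIntegral_const, smul_eq_mul, measureReal_def]

lemma setIntegral_zero_of_eqOn {S : Set (ℝ × ℝ)} (hS : MeasurableSet S) {g : ℝ × ℝ → ℝ}
    (hg : ∀ x ∈ S, g x = 0) : ∫ x in S, g x = 0 := by
  rw [setIntegral_const_of_eqOn hS hg, mul_zero]

lemma integrableOn_of_eqOn_const {S : Set (ℝ × ℝ)} (hS : MeasurableSet S) {g : ℝ × ℝ → ℝ}
    {k : ℝ} (hg : ∀ x ∈ S, g x = k) (hfin : volume S < ⊤) : IntegrableOn g S := by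
  rw [integrableOn_congr_fun (fun x hx => hg x hx) hS]
  exact integrableOn_const hfin.ne

lemma Per1_one_rect {p q r s : ℝ} (hpq : p < q) (hrs : r < s) {Ω : Set (ℝ × ℝ)}
    (hΩ : Icc (p - 1/2) (q + 1/2) ×ˢ Icc (r - 1/2) (s + 1/2) ⊆ Ω) :
    Per1 (Ioo p q ×ˢ Ioo r s) Ω = ENNReal.ofReal (2*(q - p) + 2*(s - r)) := by
  have key := Per1_rects (fun _ : Fin 1 => p) (fun _ => q) (fun _ => r) (fun _ => s)
    (fun i j hij => absurd (Subsingleton.elim i j) hij) (fun _ => hpq) (fun _ => hrs)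
    (Ω := Ω) (fun _ => hΩ)
  rwa [iUnion_const, Fin.sum_univ_one] at key

lemma Per1_two_rects {p1 q1 r1 s1 p2 q2 r2 s2 : ℝ} (h1 : p1 < q1) (h2 : r1 < s1)
    (h3 : p2 < q2) (h4 : r2 < s2) (hs : s1 + 1 ≤ r2 ∨ s2 + 1 ≤ r1) {Ω : Set (ℝ × ℝ)}
    (hΩ1 : Icc (p1 - 1/2) (q1 + 1/2) ×ˢ Icc (r1 - 1/2) (s1 + 1/2) ⊆ Ω)
    (hΩ2 : Icc (p2 - 1/2) (q2 + 1/2) ×ˢ Icc (r2 - 1/2) (s2 + 1/2) ⊆ Ω) :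
    Per1 (Ioo p1 q1 ×ˢ Ioo r1 s1 ∪ Ioo p2 q2 ×ˢ Ioo r2 s2) Ω
      = ENNReal.ofReal ((2*(q1 - p1) + 2*(s1 - r1)) + (2*(q2 - p2) + 2*(s2 - r2))) := by
  have key := Per1_rects ![p1, p2] ![q1, q2] ![r1, r2] ![s1, s2]
    (fun i j hij => by
      fin_cases i <;> fin_cases j <;> simp_all <;>
        first
          | exact hs
          | exact hs.symm)
    (fun i => by fin_cases i <;> simpa)
    (fun i => by fin_cases i <;> simpa)
    (Ω := Ω) (fun i => by fin_cases i <;> first | exact hΩ1 | exact hΩ2)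
  rw [iUnion_fin_two, Fin.sum_univ_two] at key
  simpa using key

lemma Per1_three_rects {p1 q1 r1 s1 p2 q2 r2 s2 p3 q3 r3 s3 : ℝ}
    (h1 : p1 < q1) (h2 : r1 < s1) (h3 : p2 < q2) (h4 : r2 < s2) (h5 : p3 < q3) (h6 : r3 < s3)
    (hs12 : s1 + 1 ≤ r2 ∨ s2 + 1 ≤ r1) (hs13 : s1 + 1 ≤ r3 ∨ s3 + 1 ≤ r1)
    (hs23 : s2 + 1 ≤ r3 ∨ s3 + 1 ≤ r2) {Ω : Set (ℝ × ℝ)}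
    (hΩ1 : Icc (p1 - 1/2) (q1 + 1/2) ×ˢ Icc (r1 - 1/2) (s1 + 1/2) ⊆ Ω)
    (hΩ2 : Icc (p2 - 1/2) (q2 + 1/2) ×ˢ Icc (r2 - 1/2) (s2 + 1/2) ⊆ Ω)
    (hΩ3 : Icc (p3 - 1/2) (q3 + 1/2) ×ˢ Icc (r3 - 1/2) (s3 + 1/2) ⊆ Ω) :
    Per1 (Ioo p1 q1 ×ˢ Ioo r1 s1 ∪ Ioo p2 q2 ×ˢ Ioo r2 s2 ∪ Ioo p3 q3 ×ˢ Ioo r3 s3) Ω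
      = ENNReal.ofReal ((2*(q1 - p1) + 2*(s1 - r1)) + (2*(q2 - p2) + 2*(s2 - r2))
          + (2*(q3 - p3) + 2*(s3 - r3))) := by
  have key := Per1_rects ![p1, p2, p3] ![q1, q2, q3] ![r1, r2, r3] ![s1, s2, s3]
    (fun i j hij => by
      fin_cases i <;> fin_cases j <;> simp_all <;>
        first
          | exact hs12 | exact hs12.symm
          | exact hs13 | exact hs13.symm
          | exact hs23 | exact hs23.symm)
    (fun i => by fin_cases i <;> simpa)
    (fun i => by fin_cases i <;> simpa)
    (Ω := Ω) (fun i => by fin_cases i <;> first | exact hΩ1 | exact hΩ2 | exact hΩ3)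
  rw [iUnion_fin_three, Fin.sum_univ_three] at key
  simpa using key

end CVhelpers

/-- A counterexample: for the three-phase anisotropic Chan–Vese functional,
the partition obtained by thresholding the `AROF` solution is *not* a minimizer. -/
theorem thresholded_partition_not_CVn_minimizer (L R : ℝ) (hL : 4 ≤ L) (hR : L + 3 ≤ R) :
    let Ω : Set (ℝ × ℝ) := Set.Ioo (-R) R ×ˢ Set.Ioo (-R) R
    let C₁ : Set (ℝ × ℝ) := Set.Ioo (-1 : ℝ) 1 ×ˢ Set.Ioo (-L - 1) (-L + 1)
    let C₂ : Set (ℝ × ℝ) := Set.Ioo (-(1/2) : ℝ) (1/2) ×ˢ Set.Ioo (-(1/2) : ℝ) (1/2)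
    let C₃ : Set (ℝ × ℝ) := Set.Ioo (-2 : ℝ) 2 ×ˢ Set.Ioo (L - 2) (L + 2)
    let A : Set (ℝ × ℝ) := C₁ ∪ C₂ ∪ C₃
    let f : ℝ × ℝ → ℝ := fun x => C₁.indicator 1 x + C₂.indicator 1 x + (1/2) * C₃.indicator 1 x
    let c : Fin 3 → ℝ := ![1, 9/17, 0]
    let μ : Fin 3 → ℝ := ![85/8, 1445/72, 85/9]
    (∫ x in C₂ ∪ C₃, f x) / (volume (C₂ ∪ C₃)).toReal = 9/17 ∧
    (∫ x in Ω \ closure A, f x) / (volume (Ω \ closure A)).toReal = 0 ∧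
    CVn Ω f 3 ![C₁ ∪ C₂, C₃, Ω \ closure A] c μ
      = ENNReal.ofReal (725/72) * volume C₁ ∧
    CVn Ω f 3 ![C₁, C₂ ∪ C₃, Ω \ closure A] c μ
      = ENNReal.ofReal (733/72) * volume C₁ ∧
    CVn Ω f 3 ![C₁ ∪ C₂, C₃, Ω \ closure A] c μ
      < CVn Ω f 3 ![C₁, C₂ ∪ C₃, Ω \ closure A] c μ ∧
    ¬ ∀ Q : Fin 3 → Set (ℝ × ℝ), IsPartition Ω 3 Q →
        CVn Ω f 3 ![C₁, C₂ ∪ C₃, Ω \ closure A] c μ ≤ CVn Ω f 3 Q c μ := by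
  intro Ω C₁ C₂ C₃ A f c μ
  have hR7 : (7:ℝ) ≤ R := by linarith
  -- c and μ evaluations
  have hc0 : c 0 = 1 := rfl
  have hc1 : c 1 = 9/17 := rfl
  have hc2 : c 2 = 0 := rfl
  have hμ0 : μ 0 = 85/8 := rfl
  have hμ1 : μ 1 = 1445/72 := rfl
  have hμ2 : μ 2 = 85/9 := rfl
  -- measurability
  have hm1 : MeasurableSet C₁ := measurableSet_Ioo.prod measurableSet_Ioo
  have hm2 : MeasurableSet C₂ := measurableSet_Ioo.prod measurableSet_Ioo
  have hm3 : MeasurableSet C₃ := measurableSet_Ioo.prod measurableSet_Ioo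
  have hmΩ : MeasurableSet Ω := measurableSet_Ioo.prod measurableSet_Ioo
  have hmO : MeasurableSet (Ω \ closure A) := hmΩ.diff isClosed_closure.measurableSet
  -- volumes
  have hv1 : volume C₁ = ENNReal.ofReal 4 := by
    show volume ((Ioo (-1 : ℝ) 1 ×ˢ Ioo (-L - 1) (-L + 1) : Set (ℝ × ℝ))) = _
    rw [volume_prodIoo, ← ENNReal.ofReal_mul (by norm_num)]
    congr 1; ring
  have hv2 : volume C₂ = ENNReal.ofReal 1 := by
    show volume ((Ioo (-(1/2) : ℝ) (1/2) ×ˢ Ioo (-(1/2) : ℝ) (1/2) : Set (ℝ × ℝ))) = _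
    rw [volume_prodIoo, ← ENNReal.ofReal_mul (by norm_num)]
    congr 1; ring
  have hv3 : volume C₃ = ENNReal.ofReal 16 := by
    show volume ((Ioo (-2 : ℝ) 2 ×ˢ Ioo (L - 2) (L + 2) : Set (ℝ × ℝ))) = _
    rw [volume_prodIoo, ← ENNReal.ofReal_mul (by norm_num)]
    congr 1; ring
  have hv2t : (volume C₂).toReal = 1 := by rw [hv2, ENNReal.toReal_ofReal]; norm_num
  have hv3t : (volume C₃).toReal = 16 := by rw [hv3, ENNReal.toReal_ofReal]; norm_num
  -- disjointness
  have hd12 : Disjoint C₁ C₂ := by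
    rw [Set.disjoint_left]
    rintro ⟨x, y⟩ ⟨_, hy1⟩ ⟨_, hy2⟩
    simp only [mem_Ioo] at hy1 hy2
    linarith [hy1.2, hy2.1]
  have hd13 : Disjoint C₁ C₃ := by
    rw [Set.disjoint_left]
    rintro ⟨x, y⟩ ⟨_, hy1⟩ ⟨_, hy2⟩
    simp only [mem_Ioo] at hy1 hy2
    linarith [hy1.2, hy2.1]
  have hd23 : Disjoint C₂ C₃ := by
    rw [Set.disjoint_left]
    rintro ⟨x, y⟩ ⟨_, hy1⟩ ⟨_, hy2⟩
    simp only [mem_Ioo] at hy1 hy2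
    linarith [hy1.2, hy2.1]
  -- values of f
  have hfC1 : ∀ x ∈ C₁, f x = 1 := by
    intro x hx
    have h2 : x ∉ C₂ := Set.disjoint_left.mp hd12 hx
    have h3 : x ∉ C₃ := Set.disjoint_left.mp hd13 hx
    show C₁.indicator 1 x + C₂.indicator 1 x + (1/2) * C₃.indicator 1 x = 1
    rw [Set.indicator_of_mem hx, Set.indicator_of_notMem h2, Set.indicator_of_notMem h3]
    norm_num
  have hfC2 : ∀ x ∈ C₂, f x = 1 := by
    intro x hx
    have h1 : x ∉ C₁ := Set.disjoint_left.mp hd12.symm hx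
    have h3 : x ∉ C₃ := Set.disjoint_left.mp hd23 hx
    show C₁.indicator 1 x + C₂.indicator 1 x + (1/2) * C₃.indicator 1 x = 1
    rw [Set.indicator_of_mem hx, Set.indicator_of_notMem h1, Set.indicator_of_notMem h3]
    norm_num
  have hfC3 : ∀ x ∈ C₃, f x = 1/2 := by
    intro x hx
    have h1 : x ∉ C₁ := Set.disjoint_left.mp hd13.symm hx
    have h2 : x ∉ C₂ := Set.disjoint_left.mp hd23.symm hx
    show C₁.indicator 1 x + C₂.indicator 1 x + (1/2) * C₃.indicator 1 x = 1/2
    rw [Set.indicator_of_mem hx, Set.indicator_of_notMem h1, Set.indicator_of_notMem h2]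
    norm_num
  have hfO : ∀ x ∈ Ω \ closure A, f x = 0 := by
    intro x hx
    have hnA : x ∉ A := fun h => hx.2 (subset_closure h)
    have h1 : x ∉ C₁ := fun h => hnA (mem_union_left _ (mem_union_left _ h))
    have h2 : x ∉ C₂ := fun h => hnA (mem_union_left _ (mem_union_right _ h))
    have h3 : x ∉ C₃ := fun h => hnA (mem_union_right _ h)
    show C₁.indicator 1 x + C₂.indicator 1 x + (1/2) * C₃.indicator 1 x = 0
    rw [Set.indicator_of_notMem h1, Set.indicator_of_notMem h2, Set.indicator_of_notMem h3]
    norm_num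
  -- subsets of Ω
  have hC1Ω : C₁ ⊆ Ω :=
    Set.prod_mono (Ioo_subset_Ioo (by linarith) (by linarith))
      (Ioo_subset_Ioo (by linarith) (by linarith))
  have hC2Ω : C₂ ⊆ Ω :=
    Set.prod_mono (Ioo_subset_Ioo (by linarith) (by linarith))
      (Ioo_subset_Ioo (by linarith) (by linarith))
  have hC3Ω : C₃ ⊆ Ω :=
    Set.prod_mono (Ioo_subset_Ioo (by linarith) (by linarith))
      (Ioo_subset_Ioo (by linarith) (by linarith))
  -- Per1 computations
  have hP8 : Per1 C₁ Ω = ENNReal.ofReal 8 := by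
    have key := Per1_one_rect (p := (-1:ℝ)) (q := 1) (r := -L-1) (s := -L+1)
      (by norm_num) (by linarith)
      (Ω := Ω) (Set.prod_mono (Icc_subset_Ioo (by linarith) (by linarith))
        (Icc_subset_Ioo (by linarith) (by linarith)))
    rw [show (2*((1:ℝ) - (-1)) + 2*((-L+1) - (-L-1))) = 8 by ring] at key
    exact key
  have hP12 : Per1 (C₁ ∪ C₂) Ω = ENNReal.ofReal 12 := by
    have key := Per1_two_rects (p1 := (-1:ℝ)) (q1 := 1) (r1 := -L-1) (s1 := -L+1)
      (p2 := -(1/2)) (q2 := 1/2) (r2 := -(1/2)) (s2 := 1/2)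
      (by norm_num) (by linarith) (by norm_num) (by norm_num)
      (Or.inl (by linarith))
      (Ω := Ω) (Set.prod_mono (Icc_subset_Ioo (by linarith) (by linarith))
        (Icc_subset_Ioo (by linarith) (by linarith)))
      (Set.prod_mono (Icc_subset_Ioo (by linarith) (by linarith))
        (Icc_subset_Ioo (by linarith) (by linarith)))
    rw [show ((2*((1:ℝ) - (-1)) + 2*((-L+1) - (-L-1))) + (2*((1/2:ℝ) - (-(1/2))) + 2*((1/2:ℝ) - (-(1/2))))) = 12 by ring] at key
    exact key
  have hP28 : Per1 (C₁ ∪ C₂ ∪ C₃) Ω = ENNReal.ofReal 28 := by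
    have key := Per1_three_rects (p1 := (-1:ℝ)) (q1 := 1) (r1 := -L-1) (s1 := -L+1)
      (p2 := -(1/2)) (q2 := 1/2) (r2 := -(1/2)) (s2 := 1/2)
      (p3 := -2) (q3 := 2) (r3 := L-2) (s3 := L+2)
      (by norm_num) (by linarith) (by norm_num) (by norm_num) (by norm_num) (by linarith)
      (Or.inl (by linarith)) (Or.inl (by linarith)) (Or.inl (by linarith))
      (Ω := Ω) (Set.prod_mono (Icc_subset_Ioo (by linarith) (by linarith))
        (Icc_subset_Ioo (by linarith) (by linarith)))
      (Set.prod_mono (Icc_subset_Ioo (by linarith) (by linarith))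
        (Icc_subset_Ioo (by linarith) (by linarith)))
      (Set.prod_mono (Icc_subset_Ioo (by linarith) (by linarith))
        (Icc_subset_Ioo (by linarith) (by linarith)))
    rw [show ((2*((1:ℝ) - (-1)) + 2*((-L+1) - (-L-1))) + (2*((1/2:ℝ) - (-(1/2))) + 2*((1/2:ℝ) - (-(1/2))))
        + (2*((2:ℝ) - (-2)) + 2*((L+2) - (L-2)))) = 28 by ring] at key
    exact key
  -- the "full" union and its null complement
  have hclA_null : volume (closure A \ A) = 0 := by
    have hcl : closure A = (Icc (-1 : ℝ) 1 ×ˢ Icc (-L-1) (-L+1))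
        ∪ (Icc (-(1/2) : ℝ) (1/2) ×ˢ Icc (-(1/2) : ℝ) (1/2))
        ∪ (Icc (-2 : ℝ) 2 ×ˢ Icc (L-2) (L+2)) := by
      show closure (C₁ ∪ C₂ ∪ C₃) = _
      rw [closure_union, closure_union]
      show closure ((Ioo (-1 : ℝ) 1 ×ˢ Ioo (-L - 1) (-L + 1) : Set (ℝ × ℝ)))
          ∪ closure ((Ioo (-(1/2) : ℝ) (1/2) ×ˢ Ioo (-(1/2) : ℝ) (1/2) : Set (ℝ × ℝ)))
          ∪ closure ((Ioo (-2 : ℝ) 2 ×ˢ Ioo (L - 2) (L + 2) : Set (ℝ × ℝ))) = _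
      rw [closure_prod_eq, closure_prod_eq, closure_prod_eq,
        closure_Ioo (by norm_num : (-1:ℝ) ≠ 1),
        closure_Ioo (ne_of_lt (by linarith) : (-L-1 : ℝ) ≠ -L+1),
        closure_Ioo (by norm_num : (-(1/2):ℝ) ≠ 1/2),
        closure_Ioo (by norm_num : (-2:ℝ) ≠ 2),
        closure_Ioo (ne_of_lt (by linarith) : (L-2 : ℝ) ≠ L+2)]
    apply measure_mono_null (show closure A \ A ⊆
        ((Icc (-1 : ℝ) 1 ×ˢ Icc (-L-1) (-L+1)) \ C₁)
        ∪ ((Icc (-(1/2) : ℝ) (1/2) ×ˢ Icc (-(1/2) : ℝ) (1/2)) \ C₂)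
        ∪ ((Icc (-2 : ℝ) 2 ×ˢ Icc (L-2) (L+2)) \ C₃) by
      intro x hx
      obtain ⟨hxcl, hxA⟩ := hx
      rw [hcl] at hxcl
      have h1 : x ∉ C₁ := fun h => hxA (mem_union_left _ (mem_union_left _ h))
      have h2 : x ∉ C₂ := fun h => hxA (mem_union_left _ (mem_union_right _ h))
      have h3 : x ∉ C₃ := fun h => hxA (mem_union_right _ h)
      rcases hxcl with (h | h) | h
      · exact mem_union_left _ (mem_union_left _ ⟨h, h1⟩)
      · exact mem_union_left _ (mem_union_right _ ⟨h, h2⟩)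
      · exact mem_union_right _ ⟨h, h3⟩)
    apply measure_union_null
    apply measure_union_null
    · exact frame_null _ _ _ _
    · exact frame_null _ _ _ _
    · exact frame_null _ _ _ _
  have hUsub : C₁ ∪ C₂ ∪ C₃ ∪ (Ω \ closure A) ⊆ Ω :=
    union_subset (union_subset (union_subset hC1Ω hC2Ω) hC3Ω) diff_subset
  have hΩdiff_null : volume (Ω \ (C₁ ∪ C₂ ∪ C₃ ∪ (Ω \ closure A))) = 0 := by
    apply measure_mono_null (show Ω \ (C₁ ∪ C₂ ∪ C₃ ∪ (Ω \ closure A)) ⊆ closure A \ A by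
      rintro x ⟨hxΩ, hxU⟩
      have hxA : x ∉ A := fun h => hxU (mem_union_left _ h)
      have hxcl : x ∈ closure A := by
        by_contra hnc
        exact hxU (mem_union_right _ ⟨hxΩ, hnc⟩)
      exact ⟨hxcl, hxA⟩)
    exact hclA_null
  have hPF : Per1 (C₁ ∪ C₂ ∪ C₃ ∪ (Ω \ closure A)) Ω = 0 :=
    Per1_full (by linarith : (0:ℝ) ≤ R) hUsub hΩdiff_null
  -- fidelity integrals
  have I11 : ∫ x in C₁ ∪ C₂, (1 - f x)^2 = 0 := by
    apply setIntegral_zero_of_eqOn (hm1.union hm2)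
    intro x hx
    rcases hx with h | h
    · rw [hfC1 x h]; norm_num
    · rw [hfC2 x h]; norm_num
  have I1B : ∫ x in C₁, (1 - f x)^2 = 0 := by
    apply setIntegral_zero_of_eqOn hm1
    intro x hx
    rw [hfC1 x hx]; norm_num
  have I2 : ∫ x in C₃, (9/17 - f x)^2 = 4/289 := by
    rw [setIntegral_const_of_eqOn hm3 (k := 1/1156)
      (fun x hx => by rw [hfC3 x hx]; norm_num), hv3t]
    norm_num
  have I2B : ∫ x in C₂ ∪ C₃, (9/17 - f x)^2 = 4/17 := by
    rw [setIntegral_union hd23 hm3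
      (integrableOn_of_eqOn_const hm2 (k := 64/289)
        (fun x hx => by rw [hfC2 x hx]; norm_num) (by rw [hv2]; exact ENNReal.ofReal_lt_top))
      (integrableOn_of_eqOn_const hm3 (k := 1/1156)
        (fun x hx => by rw [hfC3 x hx]; norm_num) (by rw [hv3]; exact ENNReal.ofReal_lt_top)),
      I2, setIntegral_const_of_eqOn hm2 (k := 64/289)
        (fun x hx => by rw [hfC2 x hx]; norm_num), hv2t]
    norm_num
  have I3 : ∫ x in Ω \ closure A, (0 - f x)^2 = 0 := by
    apply setIntegral_zero_of_eqOn hmO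
    intro x hx
    rw [hfO x hx]; norm_num
  -- numerator integrals for the first two conjuncts
  have Ifnum : ∫ x in C₂ ∪ C₃, f x = 9 := by
    rw [setIntegral_union hd23 hm3
      (integrableOn_of_eqOn_const hm2 (k := 1) hfC2 (by rw [hv2]; exact ENNReal.ofReal_lt_top))
      (integrableOn_of_eqOn_const hm3 (k := 1/2) hfC3 (by rw [hv3]; exact ENNReal.ofReal_lt_top)),
      setIntegral_const_of_eqOn hm2 hfC2, setIntegral_const_of_eqOn hm3 hfC3, hv2t, hv3t]
    norm_num
  have IfO : ∫ x in Ω \ closure A, f x = 0 := setIntegral_zero_of_eqOn hmO hfO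
  have hv23t : (volume (C₂ ∪ C₃)).toReal = 17 := by
    rw [measure_union hd23 hm3, hv2, hv3, ← ENNReal.ofReal_add (by norm_num) (by norm_num),
      ENNReal.toReal_ofReal (by norm_num)]
    norm_num
  -- CVn reduction
  have hCVn : ∀ P : Fin 3 → Set (ℝ × ℝ),
      CVn Ω f 3 P c μ
        = (Per1 (P 0) Ω + ENNReal.ofReal (μ 0 * ∫ x in P 0, (c 0 - f x)^2))
          + (Per1 (P 0 ∪ P 1) Ω + ENNReal.ofReal (μ 1 * ∫ x in P 1, (c 1 - f x)^2))
          + (Per1 (P 0 ∪ P 1 ∪ P 2) Ω + ENNReal.ofReal (μ 2 * ∫ x in P 2, (c 2 - f x)^2)) := by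
    intro P
    simp only [CVn]
    rw [Fin.sum_univ_three, biUnion_le_zero3, biUnion_le_one3, biUnion_le_two3]
  -- value of CVn on partition A
  have hCVA : CVn Ω f 3 ![C₁ ∪ C₂, C₃, Ω \ closure A] c μ
      = ENNReal.ofReal (725/72) * volume C₁ := by
    rw [hCVn]
    rw [show (![C₁ ∪ C₂, C₃, Ω \ closure A] : Fin 3 → Set (ℝ × ℝ)) 0 = C₁ ∪ C₂ from rfl,
      show (![C₁ ∪ C₂, C₃, Ω \ closure A] : Fin 3 → Set (ℝ × ℝ)) 1 = C₃ from rfl,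
      show (![C₁ ∪ C₂, C₃, Ω \ closure A] : Fin 3 → Set (ℝ × ℝ)) 2 = Ω \ closure A from rfl,
      hc0, hc1, hc2, hμ0, hμ1, hμ2]
    rw [show C₁ ∪ C₂ ∪ C₃ ∪ (Ω \ closure A) = C₁ ∪ C₂ ∪ C₃ ∪ (Ω \ closure A) from rfl]
    rw [hP12, hP28, hPF, I11, I2, I3, hv1]
    rw [show (85/8 : ℝ) * 0 = 0 by ring, show (85/9 : ℝ) * 0 = 0 by ring,
      show (1445/72 : ℝ) * (4/289) = 5/18 by norm_num]
    rw [ENNReal.ofReal_zero, ← ENNReal.ofReal_mul (by norm_num)]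
    rw [← ENNReal.ofReal_add (by norm_num) (by norm_num)]
    simp only [add_zero, zero_add]
    rw [← ENNReal.ofReal_add (by norm_num) (by norm_num)]
    congr 1
    norm_num
  -- value of CVn on partition B
  have hCVB : CVn Ω f 3 ![C₁, C₂ ∪ C₃, Ω \ closure A] c μ
      = ENNReal.ofReal (733/72) * volume C₁ := by
    rw [hCVn]
    rw [show (![C₁, C₂ ∪ C₃, Ω \ closure A] : Fin 3 → Set (ℝ × ℝ)) 0 = C₁ from rfl,
      show (![C₁, C₂ ∪ C₃, Ω \ closure A] : Fin 3 → Set (ℝ × ℝ)) 1 = C₂ ∪ C₃ from rfl,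
      show (![C₁, C₂ ∪ C₃, Ω \ closure A] : Fin 3 → Set (ℝ × ℝ)) 2 = Ω \ closure A from rfl,
      hc0, hc1, hc2, hμ0, hμ1, hμ2]
    rw [show C₁ ∪ (C₂ ∪ C₃) = C₁ ∪ C₂ ∪ C₃ from (union_assoc _ _ _).symm]
    rw [hP8, hP28, hPF, I1B, I2B, I3, hv1]
    rw [show (85/8 : ℝ) * 0 = 0 by ring, show (85/9 : ℝ) * 0 = 0 by ring,
      show (1445/72 : ℝ) * (4/17) = 85/18 by norm_num]
    rw [ENNReal.ofReal_zero, ← ENNReal.ofReal_mul (by norm_num)]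
    rw [← ENNReal.ofReal_add (by norm_num) (by norm_num)]
    simp only [add_zero, zero_add]
    rw [← ENNReal.ofReal_add (by norm_num) (by norm_num)]
    congr 1
    norm_num
  -- strict inequality
  have hlt : CVn Ω f 3 ![C₁ ∪ C₂, C₃, Ω \ closure A] c μ
      < CVn Ω f 3 ![C₁, C₂ ∪ C₃, Ω \ closure A] c μ := by
    rw [hCVA, hCVB, hv1, ← ENNReal.ofReal_mul (by norm_num), ← ENNReal.ofReal_mul (by norm_num)]
    rw [ENNReal.ofReal_lt_ofReal_iff (by norm_num)]
    norm_num
  refine ⟨?_, ?_, hCVA, hCVB, hlt, ?_⟩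
  · rw [Ifnum, hv23t]
  · rw [IfO, zero_div]
  · -- not a minimizer
    intro hall
    have hIsPart : IsPartition Ω 3 ![C₁ ∪ C₂, C₃, Ω \ closure A] := by
      refine ⟨?_, ?_, ?_, ?_, ?_⟩
      · intro i
        fin_cases i
        · exact hm1.union hm2
        · exact hm3
        · exact hmO
      · intro i
        fin_cases i
        · exact ⟨((0:ℝ), -L), Or.inl (Set.mk_mem_prod
            (mem_Ioo.mpr ⟨by norm_num, by norm_num⟩)
            (mem_Ioo.mpr ⟨by linarith, by linarith⟩))⟩
        · exact ⟨((0:ℝ), L), Set.mk_mem_prod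
            (mem_Ioo.mpr ⟨by norm_num, by norm_num⟩)
            (mem_Ioo.mpr ⟨by linarith, by linarith⟩)⟩
        · refine ⟨((3:ℝ), 0), ⟨Set.mk_mem_prod
            (mem_Ioo.mpr ⟨by linarith, by linarith⟩)
            (mem_Ioo.mpr ⟨by linarith, by linarith⟩), ?_⟩⟩
          intro hc
          have hAsub : A ⊆ (Icc (-2 : ℝ) 2 ×ˢ (univ : Set ℝ)) := by
            rintro ⟨x, y⟩ ((h | h) | h)
            · have hx : x ∈ Ioo (-1 : ℝ) 1 := h.1
              exact ⟨⟨by linarith [hx.1], by linarith [hx.2]⟩, trivial⟩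
            · have hx : x ∈ Ioo (-(1/2) : ℝ) (1/2) := h.1
              exact ⟨⟨by linarith [hx.1], by linarith [hx.2]⟩, trivial⟩
            · have hx : x ∈ Ioo (-2 : ℝ) 2 := h.1
              exact ⟨⟨by linarith [hx.1], by linarith [hx.2]⟩, trivial⟩
          have hmem := (closure_minimal hAsub (isClosed_Icc.prod isClosed_univ)) hc
          have h3 : (3:ℝ) ∈ Icc (-2 : ℝ) 2 := hmem.1
          linarith [h3.2]
      · intro i
        fin_cases i
        · exact union_subset hC1Ω hC2Ω
        · exact hC3Ω
        · exact diff_subset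
      · intro i j hij
        have dA3 : Disjoint (C₁ ∪ C₂) C₃ := disjoint_union_left.mpr ⟨hd13, hd23⟩
        have dAO : Disjoint (C₁ ∪ C₂) (Ω \ closure A) := by
          rw [Set.disjoint_left]
          intro x hx h2
          exact h2.2 (subset_closure (mem_union_left _ hx))
        have d3O : Disjoint C₃ (Ω \ closure A) := by
          rw [Set.disjoint_left]
          intro x hx h2
          exact h2.2 (subset_closure (mem_union_right _ hx))
        fin_cases i <;> fin_cases j <;>
          first
            | exact absurd rfl hij
            | exact dA3
            | exact dA3.symm
            | exact dAO
            | exact dAO.symm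
            | exact d3O
            | exact d3O.symm
      · rw [iUnion_fin_three]
        rw [show (![C₁ ∪ C₂, C₃, Ω \ closure A] : Fin 3 → Set (ℝ × ℝ)) 0 = C₁ ∪ C₂ from rfl,
          show (![C₁ ∪ C₂, C₃, Ω \ closure A] : Fin 3 → Set (ℝ × ℝ)) 1 = C₃ from rfl,
          show (![C₁ ∪ C₂, C₃, Ω \ closure A] : Fin 3 → Set (ℝ × ℝ)) 2 = Ω \ closure A from rfl]
        apply measure_union_null
        · exact hΩdiff_null
        · rw [Set.diff_eq_empty.mpr hUsub]
          exact measure_empty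
    exact lt_irrefl _ (lt_of_lt_of_le hlt (hall _ hIsPart))
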